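/- Let Δ ≥ 3 be an integer, set d = Δ − 1 and ε = tan(π/(4d)). Let 1 ≤ k ≤ Δ and let w_1, …, w_k ∈ ℂ each satisfy |w_j − 1| ≤ ε·|w_j + 1|. Then the product w_1 · w_2 ⋯ w_k is not a real number ≤ 0; in particular w_1 ⋯ w_k ≠ −1. -/

import Mathlib

open Real Complex

/-- Each factor in the region has positive real part and controlled imaginary part. -/
lemma region_re_im {ε : ℝ} (hε0 : 0 < ε) (hε1 : ε < 1) {z : ℂ}
    (h : ‖z - 1‖ ≤ ε * ‖z + 1‖) :
    0 < z.re ∧ |z.im| ≤ (2 * ε / (1 - ε ^ 2)) * z.re := by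
  have h1 : ‖z - 1‖ ^ 2 ≤ (ε * ‖z + 1‖) ^ 2 :=
    pow_le_pow_left₀ (norm_nonneg _) h 2
  rw [mul_pow, Complex.sq_norm, Complex.sq_norm, Complex.normSq_apply, Complex.normSq_apply] at h1
  simp only [Complex.sub_re, Complex.sub_im, Complex.add_re, Complex.add_im,
    Complex.one_re, Complex.one_im] at h1
  set x := z.re
  set y := z.im
  have hden : 0 < 1 - ε ^ 2 := by nlinarith
  have hx : 0 < x := by
    nlinarith [mul_nonneg hden.le (sq_nonneg x), mul_nonneg hden.le (sq_nonneg y)]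
  refine ⟨hx, ?_⟩
  have hsq : y ^ 2 * (1 - ε ^ 2) ^ 2 ≤ (2 * ε * x) ^ 2 := by
    nlinarith [sq_nonneg ((1 + ε ^ 2) * x - (1 - ε ^ 2))]
  have hpos : 0 ≤ 2 * ε * x := by positivity
  have h2 : |y| * (1 - ε ^ 2) ≤ 2 * ε * x := by
    nlinarith [abs_nonneg y, _root_.sq_abs y, hsq, hpos]
  rw [div_mul_eq_mul_div, le_div_iff₀ hden]
  linarith

/-- For `Δ ≥ 3`, `d = Δ − 1`, `ε = tan(π/(4d))`: a product of `1 ≤ k ≤ Δ` complex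
numbers, each in the region `R(ε) = {w : |w − 1| ≤ ε·|w + 1|}`, is not a real number
`≤ 0`; in particular it is not `−1`. -/
theorem product_ne_nonpos_real (Δ : ℕ) (hΔ : 3 ≤ Δ) (d : ℕ) (hd : d = Δ - 1)
    (ε : ℝ) (hε : ε = Real.tan (Real.pi / (4 * (d : ℝ))))
    (k : ℕ) (hk1 : 1 ≤ k) (hkΔ : k ≤ Δ) (w : Fin k → ℂ)
    (hw : ∀ j, ‖w j - 1‖ ≤ ε * ‖w j + 1‖) :
    (∀ r : ℝ, r ≤ 0 → (∏ j, w j) ≠ (r : ℂ)) ∧ (∏ j, w j) ≠ -1 := by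
  have hπ := Real.pi_pos
  have hd2 : 2 ≤ d := by omega
  have hdR : (2 : ℝ) ≤ (d : ℝ) := by exact_mod_cast hd2
  have hdpos : (0 : ℝ) < (d : ℝ) := by linarith
  set θ : ℝ := Real.pi / (4 * (d : ℝ)) with hθdef
  have hθpos : 0 < θ := by positivity
  have hθlt : θ < π / 4 := by
    rw [hθdef, div_lt_div_iff₀ (by positivity) (by norm_num)]
    nlinarith
  have hθlt2 : 2 * θ < π / 2 := by linarith
  have hεpos : 0 < ε := by
    rw [hε]; exact Real.tan_pos_of_pos_of_lt_pi_div_two hθpos (by linarith)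
  have hε1 : ε < 1 := by
    rw [hε]
    calc Real.tan θ < Real.tan (π / 4) :=
          Real.tan_lt_tan_of_nonneg_of_lt_pi_div_two hθpos.le (by linarith) hθlt
      _ = 1 := Real.tan_pi_div_four
  have htan2 : Real.tan (2 * θ) = 2 * ε / (1 - ε ^ 2) := by
    rw [Real.tan_two_mul, hε]
  -- per-factor facts
  have key : ∀ j, w j ≠ 0 ∧ |Complex.arg (w j)| ≤ 2 * θ := by
    intro j
    obtain ⟨hre, him⟩ := region_re_im hεpos hε1 (hw j)
    have hne : w j ≠ 0 := fun h => by simp [h] at hre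
    refine ⟨hne, ?_⟩
    have hargs : |Complex.arg (w j)| < π / 2 := Complex.abs_arg_lt_pi_div_two_iff.mpr (Or.inl hre)
    have htanarg : Real.tan (Complex.arg (w j)) = (w j).im / (w j).re := Complex.tan_arg (w j)
    have harg_eq : Complex.arg (w j) = Real.arctan ((w j).im / (w j).re) := by
      rw [← htanarg, Real.arctan_tan (by cases abs_lt.mp hargs; linarith) (abs_lt.mp hargs).2]
    have hquot : |(w j).im / (w j).re| ≤ Real.tan (2 * θ) := by
      rw [htan2, abs_div, abs_of_pos hre, div_le_iff₀ hre]
      exact him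
    have harctan : |Real.arctan ((w j).im / (w j).re)| ≤ 2 * θ := by
      rw [abs_le]
      constructor
      · have := Real.arctan_strictMono.monotone (neg_le_of_abs_le hquot : -(Real.tan (2*θ)) ≤ _)
        rw [← Real.tan_neg, Real.arctan_tan (by linarith) (by linarith)] at this
        linarith [this]
      · have := Real.arctan_strictMono.monotone (le_of_abs_le hquot)
        rwa [Real.arctan_tan (by linarith) hθlt2] at this
    rw [harg_eq]; exact harctan
  have hne : ∀ j, w j ≠ 0 := fun j => (key j).1
  -- write the product as an exponential
  have hprod : ∏ j, w j = Complex.exp (∑ j, Complex.log (w j)) := by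
    rw [Complex.exp_sum]
    exact Finset.prod_congr rfl fun j _ => (Complex.exp_log (hne j)).symm
  set z := ∑ j, Complex.log (w j) with hz
  have him : z.im = ∑ j, Complex.arg (w j) := by
    rw [hz, Complex.im_sum]
    exact Finset.sum_congr rfl fun j _ => Complex.log_im _
  -- bound the total argument
  have hS : |z.im| ≤ 3 * π / 4 := by
    rw [him]
    calc |∑ j, Complex.arg (w j)| ≤ ∑ j, |Complex.arg (w j)| :=
          Finset.abs_sum_le_sum_abs _ _
      _ ≤ ∑ _j : Fin k, 2 * θ := Finset.sum_le_sum fun j _ => (key j).2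
      _ = (k : ℝ) * (2 * θ) := by simp [Finset.sum_const, Finset.card_univ]
      _ ≤ 3 * π / 4 := by
          have hk : (k : ℝ) ≤ (d : ℝ) + 1 := by
            have : k ≤ d + 1 := by omega
            exact_mod_cast this
          rw [hθdef]
          rw [show (k : ℝ) * (2 * (π / (4 * (d : ℝ)))) = (k : ℝ) * π / (2 * (d : ℝ)) by
            field_simp; ring]
          rw [div_le_div_iff₀ (by positivity) (by norm_num)]
          nlinarith
  have hSπ : |z.im| < π := by nlinarith
  have main : ∀ r : ℝ, r ≤ 0 → (∏ j, w j) ≠ (r : ℂ) := by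
    intro r hr heq
    rw [hprod] at heq
    have him0 : Real.exp z.re * Real.sin z.im = 0 := by
      have := congrArg Complex.im heq
      simpa [Complex.exp_im] using this
    have hsin : Real.sin z.im = 0 :=
      (mul_eq_zero.mp him0).resolve_left (Real.exp_ne_zero _)
    have hzim : z.im = 0 := by
      rw [Real.sin_eq_zero_iff_of_lt_of_lt (by cases abs_lt.mp hSπ; linarith)
        (abs_lt.mp hSπ).2] at hsin
      exact hsin
    have hre : Real.exp z.re * Real.cos z.im = r := by
      have := congrArg Complex.re heq
      simpa [Complex.exp_re] using this
    rw [hzim, Real.cos_zero, mul_one] at hre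
    have := Real.exp_pos z.re
    linarith
  refine ⟨main, fun h => main (-1) (by norm_num) ?_⟩
  rw [h]; norm_num
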